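/- An arbitrary subset M ⊆ 𝕋±^d is tropically convex if and only if for all p, q ∈ M the signed tropical convex hull tconv({p,q}) is contained in M. -/
import Mathlib


/-!  Signed tropical numbers 𝕋±, the symmetrized tropical semiring 𝕊,
     and signed tropical convexity (Loho–Végh). -/

inductive SSign : Type where
  | pos : SSign
  | neg : SSign
  | bal : SSign
deriving DecidableEq

/-- The symmetrized tropical semiring 𝕊: the tropical zero 𝟘 = -∞ together with
elements `elem s r` where `s` is a sign (⊕, ⊖ or •) and `r` a real number. -/
inductive STrop : Type where
  | zero : STrop
  | elem : SSign → ℝ → STrop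

namespace STrop

/-- membership in the signed tropical numbers 𝕋± (i.e. not balanced-nonzero). -/
def isSigned : STrop → Prop
  | elem SSign.bal _ => False
  | _ => True

/-- membership in 𝕋≥, the nonnegative tropical numbers. -/
def nneg : STrop → Prop
  | zero => True
  | elem SSign.pos _ => True
  | _ => False

/-- membership in 𝕋≤, the nonpositive tropical numbers. -/
def npos : STrop → Prop
  | zero => True
  | elem SSign.neg _ => True
  | _ => False

/-- strictly positive signed element (sign ⊕, not 𝟘). -/
def isPos : STrop → Prop
  | elem SSign.pos _ => True
  | _ => False

/-- balanced or 𝟘 (membership in 𝕋•). -/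
def balZero : STrop → Prop
  | zero => True
  | elem SSign.bal _ => True
  | _ => False

/-- the negation map ⊖. -/
def neg : STrop → STrop
  | zero => zero
  | elem SSign.pos r => elem SSign.neg r
  | elem SSign.neg r => elem SSign.pos r
  | elem SSign.bal r => elem SSign.bal r

/-- tropical addition ⊕ on 𝕊. -/
noncomputable def add : STrop → STrop → STrop
  | zero, y => y
  | x, zero => x
  | elem s r, elem t u =>
    if r < u then elem t u
    else if u < r then elem s r
    else if s = t then elem s r
    else elem SSign.bal r

def signMul : SSign → SSign → SSign
  | SSign.pos, t => t
  | SSign.neg, SSign.pos => SSign.neg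
  | SSign.neg, SSign.neg => SSign.pos
  | SSign.neg, SSign.bal => SSign.bal
  | SSign.bal, _ => SSign.bal

/-- tropical multiplication ⊙ on 𝕊. -/
def mul : STrop → STrop → STrop
  | zero, _ => zero
  | _, zero => zero
  | elem s r, elem t u => elem (signMul s t) (r + u)

/-- a ⊖ b := a ⊕ (⊖b). -/
noncomputable def sub (x y : STrop) : STrop := add x (neg y)

/-- the tropical one, the signed element ⊕0. -/
def one : STrop := elem SSign.pos 0

/-- the absolute value |·| : 𝕊 → 𝕋≥. -/
def absS : STrop → STrop
  | zero => zero
  | elem _ r => elem SSign.pos r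

/-- strict order: x > y iff x ⊖ y is a strictly positive signed element. -/
def sgt (x y : STrop) : Prop := isPos (sub x y)

/-- balance relation: x ⋈ y iff x ⊖ y is balanced or 𝟘. -/
def bal (x y : STrop) : Prop := balZero (sub x y)

/-- the relation ⊵ : x ⊵ y iff x > y or x ⋈ y. -/
def teq (x y : STrop) : Prop := sgt x y ∨ bal x y

/-- the total order ≤ on the signed tropical numbers 𝕋±
(arbitrarily `False` whenever a balanced element is involved). -/
def sle : STrop → STrop → Prop
  | zero, zero => True
  | zero, elem SSign.pos _ => True
  | elem SSign.neg _, zero => True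
  | elem SSign.neg _, elem SSign.pos _ => True
  | elem SSign.pos r, elem SSign.pos u => r ≤ u
  | elem SSign.neg r, elem SSign.neg u => u ≤ r
  | _, _ => False

/-- U(a): the set of signed numbers incomparable with a; the singleton {a}
for signed a, and the order interval [⊖|a|, |a|] for balanced a. -/
def U : STrop → Set STrop
  | elem SSign.bal r => {x | isSigned x ∧ sle (elem SSign.neg r) x ∧ sle x (elem SSign.pos r)}
  | a => {a}

/-- tropical sum of finitely many elements of 𝕊. -/
noncomputable def sumFin : ∀ {n : ℕ}, (Fin n → STrop) → STrop
  | 0, _ => zero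
  | _ + 1, f => add (f 0) (sumFin fun i => f i.succ)

/-- matrix–vector product A ⊙ x over 𝕊. -/
noncomputable def mv {d n : ℕ} (A : Fin d → Fin n → STrop) (x : Fin n → STrop) : Fin d → STrop :=
  fun i => sumFin fun j => mul (A i j) (x j)

/-- vectors in 𝕋±^d. -/
def isSignedVec {d : ℕ} (v : Fin d → STrop) : Prop := ∀ i, isSigned (v i)

/-- the signed tropical convex hull of the columns of a matrix A:
tconv(A) = {z ∈ 𝕋±^d : z ⋈ A⊙x for some x ∈ 𝕋≥^n with ⊕_j x_j = 0}. -/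
def tconv {d n : ℕ} (A : Fin d → Fin n → STrop) : Set (Fin d → STrop) :=
  {z | isSignedVec z ∧ ∃ x : Fin n → STrop,
    (∀ j, nneg (x j)) ∧ sumFin x = one ∧ ∀ i, bal (z i) (mv A x i)}

/-- the signed tropical convex hull of an arbitrary set: the union of the hulls
of all finite collections of points of M. -/
def tconvSet {d : ℕ} (M : Set (Fin d → STrop)) : Set (Fin d → STrop) :=
  ⋃ (n : ℕ) (A : Fin d → Fin n → STrop) (_ : ∀ j, (fun i => A i j) ∈ M), tconv A

/-- a set M ⊆ 𝕋±^d is tropically convex iff M = tconv(M). -/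
def TropConvex {d : ℕ} (M : Set (Fin d → STrop)) : Prop := M = tconvSet M

/-- evaluation a ⊙ (0, x₁, …, x_d)ᵀ of an affine functional. -/
noncomputable def affEval {d : ℕ} (a : Fin (d + 1) → STrop) (x : Fin d → STrop) : STrop :=
  sumFin fun j => mul (a j) ((Fin.cons one x : Fin (d + 1) → STrop) j)

/-- the open signed tropical halfspace H⁺(a) = {x ∈ 𝕋±^d : a⊙(0,x)ᵀ > 𝟘}. -/
def Hopen {d : ℕ} (a : Fin (d + 1) → STrop) : Set (Fin d → STrop) :=
  {x | isSignedVec x ∧ sgt (affEval a x) zero}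

/-- the closed signed tropical halfspace H̄⁺(a) = {x ∈ 𝕋±^d : a⊙(0,x)ᵀ ⊵ 𝟘}. -/
def Hclosed {d : ℕ} (a : Fin (d + 1) → STrop) : Set (Fin d → STrop) :=
  {x | isSignedVec x ∧ teq (affEval a x) zero}

/-- the non-negative kernel nnker(A). -/
def nnker {d n : ℕ} (A : Fin d → Fin n → STrop) : Set (Fin n → STrop) :=
  {x | (∀ j, nneg (x j)) ∧ x ≠ (fun _ => zero) ∧ ∀ i, balZero (mv A x i)}

/-- the open tropical cone sep(A) = {y ∈ 𝕋±^d : yᵀ⊙A > 𝟘 componentwise}. -/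
def sep {d : ℕ} {J : Type} (A : Fin d → J → STrop) : Set (Fin d → STrop) :=
  {y | isSignedVec y ∧ ∀ j, isPos (sumFin fun i => mul (y i) (A i j))}

end STrop
namespace STrop
open SSign

lemma add_zero' (x : STrop) : add x zero = x := by cases x <;> rfl

lemma mul_one' (x : STrop) : mul x one = x := by
  cases x with
  | zero => rfl
  | elem s r => cases s <;> simp [mul, one, signMul]

lemma mul_zero' (x : STrop) : mul x zero = zero := by cases x <;> rfl

lemma sub_self_balZero (x : STrop) : balZero (sub x x) := by
  cases x with
  | zero => trivial
  | elem s r => cases s <;> simp [sub, neg, add, balZero]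

lemma add_eq_zero {x y : STrop} (h : add x y = zero) : x = zero ∧ y = zero := by
  cases x <;> cases y <;> simp_all [add] <;> split_ifs at h <;> simp_all

lemma sumFin_nneg {n : ℕ} (f : Fin n → STrop) (h : ∀ j, nneg (f j)) : nneg (sumFin f) := by
  induction n with
  | zero => trivial
  | succ n ih =>
    show nneg (add (f 0) (sumFin fun i => f i.succ))
    have h1 := h 0
    have h2 := ih (fun i => f i.succ) (fun i => h i.succ)
    cases hf : f 0 <;> cases hg : sumFin (fun i => f i.succ) <;>
      rw [hf] at h1 <;> rw [hg] at h2 <;> simp_all [add, nneg] <;>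
      rename_i s _ t _ <;> cases s <;> cases t <;> simp_all [nneg] <;> split_ifs <;> simp [nneg]

lemma nneg_cases {x : STrop} (h : nneg x) : x = zero ∨ ∃ r, x = elem pos r := by
  cases x with
  | zero => exact Or.inl rfl
  | elem s r => cases s <;> simp_all [nneg]

end STrop
namespace STrop
open SSign

lemma mul_pos_def (a : ℝ) (x : STrop) :
    mul (elem pos a) x = match x with | zero => zero | elem t u => elem t (a + u) := by
  cases x <;> simp [mul, signMul]

lemma mul_pos_distrib (a : ℝ) (x y : STrop) :
    mul (elem pos a) (add x y) = add (mul (elem pos a) x) (mul (elem pos a) y) := by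
  cases x <;> cases y <;> simp only [mul_pos_def, add] <;> split_ifs <;>
    first | rfl | (exfalso; linarith)

lemma mul_pos_pos (a b : ℝ) (x : STrop) :
    mul (elem pos a) (mul (elem pos b) x) = mul (elem pos (a + b)) x := by
  cases x <;> simp [mul_pos_def, add_assoc]

lemma mul_pos_comm_mul (a : ℝ) (x y : STrop) :
    mul x (mul (elem pos a) y) = mul (elem pos a) (mul x y) := by
  cases x with
  | zero => cases y <;> rfl
  | elem s r =>
    cases y with
    | zero => rfl
    | elem t u => cases s <;> cases t <;> simp [mul, signMul] <;> ring

lemma mul_comm' (x y : STrop) : mul x y = mul y x := by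
  cases x <;> cases y <;> simp [mul] <;> constructor
  · rename_i s _ t _; cases s <;> cases t <;> rfl
  · ring

lemma neg_mul_pos (a : ℝ) (x : STrop) :
    neg (mul (elem pos a) x) = mul (elem pos a) (neg x) := by
  cases x with
  | zero => rfl
  | elem s r => cases s <;> rfl

lemma balZero_mul_pos {x : STrop} (a : ℝ) (h : balZero x) : balZero (mul (elem pos a) x) := by
  cases x with
  | zero => trivial
  | elem s r => cases s <;> simp_all [mul, signMul, balZero]

lemma bal_mul_pos {x y : STrop} (a : ℝ) (h : bal x y) :
    bal (mul (elem pos a) x) (mul (elem pos a) y) := by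
  unfold bal sub at *
  rw [neg_mul_pos, ← mul_pos_distrib]
  exact balZero_mul_pos a h

lemma isSigned_mul_pos {x : STrop} (a : ℝ) (h : isSigned x) : isSigned (mul (elem pos a) x) := by
  cases x with
  | zero => trivial
  | elem s r => cases s <;> simp_all [mul, signMul, isSigned]

lemma sumFin_mul_pos {n : ℕ} (a : ℝ) (f : Fin n → STrop) :
    sumFin (fun j => mul (elem pos a) (f j)) = mul (elem pos a) (sumFin f) := by
  induction n with
  | zero => rfl
  | succ n ih =>
    show add _ (sumFin fun i => mul (elem pos a) (f i.succ)) = _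
    rw [ih (fun i => f i.succ), ← mul_pos_distrib]
    rfl

lemma sumFin_zero {n : ℕ} : sumFin (fun _ : Fin n => zero) = zero := by
  induction n with
  | zero => rfl
  | succ n ih => show add zero _ = zero; simpa [add] using ih

end STrop
namespace STrop
open SSign

set_option maxHeartbeats 1000000 in
lemma add_comm' (x y : STrop) : add x y = add y x := by
  cases x <;> cases y <;> simp only [add] <;>
    split_ifs <;> simp_all <;> first | linarith | (try constructor) <;> simp_all [eq_comm]

set_option maxHeartbeats 4000000 in
lemma add_assoc' (x y z : STrop) : add (add x y) z = add x (add y z) := by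
  cases x <;> cases y <;> cases z <;>
    simp only [add] <;> (try split_ifs) <;>
    simp only [add] <;> (try split_ifs) <;>
    simp_all <;> try linarith

lemma neg_add (x y : STrop) : neg (add x y) = add (neg x) (neg y) := by
  cases x with
  | zero => cases y <;> simp [add, neg]
  | elem s r =>
    cases y with
    | zero => cases s <;> simp [add, neg]
    | elem t u =>
      cases s <;> cases t <;> simp only [add, neg] <;> split_ifs <;> simp_all [neg]

end STrop
namespace STrop
open SSign

/-- the signed part: identity on signed elements, `zero` on balanced ones. -/
noncomputable def signedPart : STrop → STrop
  | elem SSign.pos s => elem SSign.pos s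
  | elem SSign.neg s => elem SSign.neg s
  | _ => zero

/-- choice of a signed representative `t` with `t ⋈ S` and `z ⋈ P ⊕ t`. -/
noncomputable def pick (z P S : STrop) : STrop :=
  match S with
  | elem SSign.bal _ => signedPart (sub z P)
  | _ => S

lemma isSigned_signedPart (Q : STrop) : isSigned (signedPart Q) := by
  cases Q with
  | zero => trivial
  | elem s r => cases s <;> trivial

lemma sub_eq (z w : STrop) : sub z w = add z (neg w) := rfl

lemma sub_add (z P S : STrop) : sub z (add P S) = add (sub z P) (neg S) := by
  rw [sub_eq, sub_eq, neg_add, ← add_assoc']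

lemma K1 {Q : STrop} {s : ℝ} (h : balZero (add Q (elem SSign.bal s))) :
    balZero (sub (signedPart Q) (elem SSign.bal s)) := by
  cases Q with
  | zero => simp [signedPart, sub, add, neg, balZero]
  | elem qs q =>
    cases qs <;> simp only [signedPart, sub, add, neg, balZero] at h ⊢ <;>
      split_ifs at h ⊢ <;> simp_all <;> linarith

lemma K2 {Q : STrop} {s : ℝ} (h : balZero (add Q (elem SSign.bal s))) :
    balZero (add Q (neg (signedPart Q))) := by
  cases Q with
  | zero => trivial
  | elem qs q =>
    cases qs <;> simp only [signedPart, add, neg, balZero] at h ⊢ <;>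
      split_ifs at h ⊢ <;> simp_all <;> linarith

lemma neg_bal (s : ℝ) : neg (elem SSign.bal s) = elem SSign.bal s := rfl

lemma pick_spec (z P S : STrop) (h : balZero (sub z (add P S))) :
    isSigned (pick z P S) ∧ balZero (sub (pick z P S) S) ∧
      balZero (sub z (add P (pick z P S))) := by
  cases S with
  | zero => exact ⟨trivial, trivial, h⟩
  | elem ss s =>
    cases ss with
    | pos => exact ⟨trivial, sub_self_balZero _, h⟩
    | neg => exact ⟨trivial, sub_self_balZero _, h⟩
    | bal =>
      rw [sub_add, neg_bal] at h
      have h1 := K1 h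
      have h2 := K2 h
      refine ⟨isSigned_signedPart _, h1, ?_⟩
      rw [sub_add]
      exact h2

lemma le_zero_of_add_nneg {w : STrop} {m : ℝ} (hw : nneg w)
    (h : add w (elem pos m) = one) : m ≤ 0 := by
  rcases nneg_cases hw with rfl | ⟨r, rfl⟩
  · simp only [add, one] at h
    simp_all
  · simp only [add, one] at h
    split_ifs at h <;> simp_all <;> linarith

end STrop
namespace STrop
open SSign

lemma sumFin_succ {n : ℕ} (f : Fin (n + 1) → STrop) :
    sumFin f = add (f 0) (sumFin fun i => f i.succ) := rfl

lemma sumFin_eq_zero {n : ℕ} {f : Fin n → STrop} (h : sumFin f = zero) : ∀ j, f j = zero := by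
  induction n with
  | zero => exact fun j => absurd j.2 (by omega)
  | succ n ih =>
    rw [sumFin_succ] at h
    obtain ⟨h0, hs⟩ := add_eq_zero h
    intro j
    rcases Fin.eq_zero_or_eq_succ j with rfl | ⟨i, rfl⟩
    · exact h0
    · exact ih hs i

lemma one_mul' (x : STrop) : mul one x = x := by
  cases x <;> simp [one, mul, signMul]

lemma nneg_mul_pos {x : STrop} (a : ℝ) (h : nneg x) : nneg (mul (elem pos a) x) := by
  rcases nneg_cases h with rfl | ⟨r, rfl⟩ <;> simp [mul, signMul, nneg]

lemma tconv_subset {d : ℕ} (M : Set (Fin d → STrop))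
    (hseg : ∀ p ∈ M, ∀ q ∈ M, tconv (fun i => ![p i, q i]) ⊆ M) :
    ∀ n (A : Fin d → Fin n → STrop), (∀ j, (fun i => A i j) ∈ M) → tconv A ⊆ M := by
  intro n
  induction n with
  | zero =>
    rintro A hA z ⟨hzS, x, hxn, hsum, hb⟩
    exact absurd hsum (by simp [sumFin, one])
  | succ n ih =>
    rintro A hA z ⟨hzS, x, hxn, hxs, hxb⟩
    set a0 : Fin d → STrop := fun i => A i 0 with ha0
    have ha0M : a0 ∈ M := hA 0
    set x' : Fin n → STrop := fun j => x j.succ with hx'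
    rw [sumFin_succ] at hxs
    set P : Fin d → STrop := fun i => mul (A i 0) (x 0) with hP
    set S : Fin d → STrop := fun i => sumFin fun j => mul (A i j.succ) (x' j) with hS
    have hxb' : ∀ i, balZero (sub (z i) (add (P i) (S i))) := fun i => hxb i
    rcases nneg_cases (sumFin_nneg x' fun j => hxn j.succ) with hzero | ⟨m, hm⟩
    · -- all weights but the first vanish
      rw [hzero, add_zero'] at hxs
      have hall := sumFin_eq_zero hzero
      have hSz : ∀ i, S i = zero := by
        intro i
        have : (fun j => mul (A i j.succ) (x' j)) = fun _ => zero :=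
          funext fun j => by rw [hall j, mul_zero']
        show sumFin (fun j => mul (A i j.succ) (x' j)) = zero
        rw [this, sumFin_zero]
      refine hseg a0 ha0M a0 ha0M ⟨hzS, ![one, zero], ?_, ?_, ?_⟩
      · intro j; fin_cases j <;> simp [nneg, one]
      · show add one (add zero zero) = one
        rfl
      · intro i
        show balZero (sub (z i) (add (mul (a0 i) one) (add (mul (a0 i) zero) zero)))
        rw [mul_one', mul_zero', add_zero', add_zero']
        have := hxb' i
        rw [hSz i, add_zero'] at this
        simp only [hP] at this
        rw [hxs, mul_one'] at this
        exact this
    · -- main case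
      rw [hm] at hxs
      have hm0 : m ≤ 0 := le_zero_of_add_nneg (hxn 0) hxs
      set lam : STrop := elem pos (-m) with hlam
      set x'' : Fin n → STrop := fun j => mul lam (x' j) with hx''
      have hsum'' : sumFin x'' = one := by
        rw [hx'']
        show sumFin (fun j => mul (elem pos (-m)) (x' j)) = one
        rw [sumFin_mul_pos, hm]
        simp [mul, signMul, one]
      set t : Fin d → STrop := fun i => pick (z i) (P i) (S i) with ht
      have hps : ∀ i, isSigned (t i) ∧ balZero (sub (t i) (S i)) ∧
          balZero (sub (z i) (add (P i) (t i))) := fun i => pick_spec _ _ _ (hxb' i)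
      set y : Fin d → STrop := fun i => mul lam (t i) with hy
      have hyM : y ∈ M := by
        refine ih (fun i j => A i j.succ) (fun j => hA j.succ) ⟨?_, x'', ?_, hsum'', ?_⟩
        · exact fun i => isSigned_mul_pos _ (hps i).1
        · exact fun j => nneg_mul_pos _ (hxn j.succ)
        · intro i
          show balZero (sub (y i) (sumFin fun j => mul (A i j.succ) (mul lam (x' j))))
          have hrw : (fun j => mul (A i j.succ) (mul lam (x' j)))
              = fun j => mul (elem pos (-m)) (mul (A i j.succ) (x' j)) :=
            funext fun j => by rw [hlam, mul_pos_comm_mul]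
          rw [hrw, sumFin_mul_pos]
          exact bal_mul_pos _ (hps i).2.1
      refine hseg a0 ha0M y hyM ⟨hzS, ![x 0, elem pos m], ?_, ?_, ?_⟩
      · intro j; fin_cases j
        · exact hxn 0
        · trivial
      · show add (x 0) (add (elem pos m) zero) = one
        rw [add_zero']
        exact hxs
      · intro i
        show balZero (sub (z i) (add (mul (a0 i) (x 0)) (add (mul (y i) (elem pos m)) zero)))
        have : mul (y i) (elem pos m) = t i := by
          rw [hy, mul_comm', hlam, mul_pos_pos, add_neg_cancel]
          exact one_mul' _
        rw [add_zero', this]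
        exact (hps i).2.2

end STrop

/-- a subset M ⊆ 𝕋±^d is tropically convex iff it contains the
signed tropical convex hull of each pair of its points. -/
theorem generation_by_line_segments (d : ℕ) (M : Set (Fin d → STrop))
    (hM : ∀ v ∈ M, STrop.isSignedVec v) :
    STrop.TropConvex M ↔
      ∀ p ∈ M, ∀ q ∈ M, STrop.tconv (fun i => ![p i, q i]) ⊆ M := by
  open STrop SSign in
  constructor
  · intro hconv p hp q hq
    have hsub : tconv (fun i => ![p i, q i]) ⊆ tconvSet M := by
      intro z hz
      refine Set.mem_iUnion.mpr ⟨2, Set.mem_iUnion.mpr ⟨fun i => ![p i, q i],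
        Set.mem_iUnion.mpr ⟨?_, hz⟩⟩⟩
      intro j
      fin_cases j
      · simpa using hp
      · simpa using hq
    rw [hconv]
    exact hsub
  · intro hseg
    apply Set.Subset.antisymm
    · intro p hp
      refine Set.mem_iUnion.mpr ⟨1, Set.mem_iUnion.mpr ⟨fun i _ => p i,
        Set.mem_iUnion.mpr ⟨fun j => by simpa using hp, ?_⟩⟩⟩
      refine ⟨hM p hp, fun _ => one, fun j => trivial, ?_, ?_⟩
      · show add one zero = one
        rfl
      · intro i
        show balZero (sub (p i) (add (mul (p i) one) zero))
        rw [mul_one', add_zero']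
        exact sub_self_balZero _
    · intro z hz
      obtain ⟨n, hn⟩ := Set.mem_iUnion.mp hz
      obtain ⟨A, hA⟩ := Set.mem_iUnion.mp hn
      obtain ⟨hcol, hzA⟩ := Set.mem_iUnion.mp hA
      exact tconv_subset M hseg n A hcol hzA
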